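/- arXiv:1405.3839 — 2 statements merged into one kernel-verified Lean document; each statement's English description precedes it below -/
import Mathlib

section
/- Fix real constants κ̃ > 0 and A₀. For κ > 0 large enough define f_κ(A) = κ·A − (κ²/κ̃)·log(A + κ/κ̃ − A₀) (the osmotic-setting area energy whose minimizer is A₀ and whose effective quadratic coefficient is κ̃). Then for every real A, the difference f_κ(A) − f_κ(A₀) converges to (κ̃/2)·(A − A₀)² as κ → ∞. That is, the osmotic-pressure area energy with κ_α^{(2)} = 0 approaches the conventional quadratic 'area constraint' energy as the surface-tension coefficient κ tends to infinity while the effective coefficient κ̃ and the target area A₀ are held fixed. -/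
open Real Set Filter

/-- With the effective quadratic coefficient `κ̃` and target area `A₀` held fixed,
the osmotic-setting area energy `f_κ(A) = κ·A − (κ²/κ̃)·log(A + κ/κ̃ − A₀)`
satisfies `f_κ(A) − f_κ(A₀) → (κ̃/2)·(A − A₀)²` as `κ → ∞`. -/
theorem osmotic_energy_tendsto_area_constraint
    (κt A₀ : ℝ) (hκt : 0 < κt)
    (f : ℝ → ℝ → ℝ)
    (hf : ∀ κ A, f κ A = κ * A - (κ ^ 2 / κt) * Real.log (A + κ / κt - A₀)) :
    ∀ A : ℝ,
      Tendsto (fun κ => f κ A - f κ A₀) atTop (nhds (κt / 2 * (A - A₀) ^ 2)) := by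
  intro A
  set x : ℝ := A - A₀ with hxdef
  rw [tendsto_iff_norm_sub_tendsto_zero]
  have hlim : Tendsto (fun κ : ℝ => 2 * κt ^ 2 * |x| ^ 3 / κ) atTop (nhds 0) := by
    have h := tendsto_inv_atTop_zero.const_mul (2 * κt ^ 2 * |x| ^ 3)
    rw [mul_zero] at h
    simpa [div_eq_mul_inv] using h
  refine squeeze_zero' (Eventually.of_forall fun κ => norm_nonneg _) ?_ hlim
  filter_upwards [eventually_gt_atTop (max 0 (2 * κt * |x|))] with κ hκ
  have hκ0 : 0 < κ := lt_of_le_of_lt (le_max_left _ _) hκ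
  set u : ℝ := κt * x / κ with hudef
  have huabs : |u| ≤ 1 / 2 := by
    have h2 : 2 * κt * |x| < κ := lt_of_le_of_lt (le_max_right _ _) hκ
    rw [hudef, abs_div, abs_of_pos hκ0, div_le_iff₀ hκ0, abs_mul, abs_of_pos hκt]
    linarith
  have hu1 : |(-u)| < 1 := by rw [abs_neg]; linarith
  have key := Real.abs_log_sub_add_sum_range_le hu1 2
  have hsum : (∑ i ∈ Finset.range 2, (-u) ^ (i + 1) / (i + 1)) = -u + u ^ 2 / 2 := by
    simp [Finset.sum_range_succ]
    ring
  rw [hsum, sub_neg_eq_add] at key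
  have h1u : 0 < 1 + u := by
    have := abs_le.mp huabs
    linarith [this.1]
  -- rewrite the difference
  have harg : A + κ / κt - A₀ = (κ / κt) * (1 + u) := by
    rw [hudef]
    field_simp
    ring
  have hlog : Real.log (A + κ / κt - A₀) = Real.log (κ / κt) + Real.log (1 + u) := by
    rw [harg, Real.log_mul (by positivity) (by positivity)]
  have harg0 : A₀ + κ / κt - A₀ = κ / κt := by ring
  have hD : f κ A - f κ A₀ - κt / 2 * x ^ 2
      = -(κ ^ 2 / κt) * ((-u + u ^ 2 / 2) + Real.log (1 + u)) := by
    rw [hf, hf, hlog, harg0]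
    have hu' : u = κt * x / κ := hudef
    field_simp [hu']
    rw [hu', hxdef]
    field_simp
    ring
  have habs3 : |u| ^ 3 = κt ^ 3 * |x| ^ 3 / κ ^ 3 := by
    rw [hudef, abs_div, abs_mul, abs_of_pos hκt, abs_of_pos hκ0]
    rw [div_pow, mul_pow]
  calc ‖f κ A - f κ A₀ - κt / 2 * x ^ 2‖
      = (κ ^ 2 / κt) * |(-u + u ^ 2 / 2) + Real.log (1 + u)| := by
        rw [Real.norm_eq_abs, hD, abs_mul, abs_neg, abs_of_pos (by positivity)]
    _ ≤ (κ ^ 2 / κt) * (|(-u)| ^ 3 / (1 - |(-u)|)) := by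
        apply mul_le_mul_of_nonneg_left key (by positivity)
    _ ≤ (κ ^ 2 / κt) * (|u| ^ 3 * 2) := by
        rw [abs_neg]
        apply mul_le_mul_of_nonneg_left _ (by positivity)
        rw [div_le_iff₀ (by linarith)]
        nlinarith [abs_nonneg u, pow_nonneg (abs_nonneg u) 3]
    _ = 2 * κt ^ 2 * |x| ^ 3 / κ := by
        rw [habs3]
        field_simp
end

section
/- Let C : [−1, 1] → ℝ be the scaled comb-area function defined by C(ρ) = (arcsin ρ − ρ·√(1 − ρ²))/ρ² for ρ ≠ 0 and C(0) = 0. Then C is strictly monotonically increasing on [−1, 1]. -/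
open Real Set

/-- The scaled comb-area function
`C(ρ) = (arcsin ρ − ρ·√(1 − ρ²))/ρ²` for `ρ ≠ 0`, `C(0) = 0`. -/
noncomputable def combC (ρ : ℝ) : ℝ :=
  if ρ = 0 then 0 else (Real.arcsin ρ - ρ * Real.sqrt (1 - ρ ^ 2)) / ρ ^ 2

lemma combC_key {x : ℝ} (h0 : 0 < x) (h1 : x < 1) :
    Real.arcsin x < x / Real.sqrt (1 - x ^ 2) := by
  have h2 : Real.arcsin x < π / 2 := (Real.arcsin_lt_pi_div_two).mpr h1
  have h3 : 0 < Real.arcsin x := Real.arcsin_pos.mpr h0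
  have := Real.lt_tan h3 h2
  rwa [Real.tan_arcsin] at this

lemma combC_hasDerivAt {x : ℝ} (h0 : 0 < x) (h1 : x < 1) :
    ∃ d, HasDerivAt combC d x ∧ 0 < d := by
  set s := Real.sqrt (1 - x ^ 2) with hsdef
  have hx2 : (0:ℝ) < 1 - x ^ 2 := by nlinarith
  have hs : 0 < s := Real.sqrt_pos.mpr hx2
  have hs2 : s ^ 2 = 1 - x ^ 2 := Real.sq_sqrt hx2.le
  have hderiv_sq : HasDerivAt (fun ρ : ℝ => 1 - ρ ^ 2) (-(2 * x)) x := by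
    simpa using ((hasDerivAt_pow 2 x).const_sub 1)
  have hsqrt : HasDerivAt (fun ρ : ℝ => Real.sqrt (1 - ρ ^ 2)) (-x / s) x := by
    have h := (Real.hasDerivAt_sqrt hx2.ne').comp x hderiv_sq
    refine h.congr_deriv ?_
    rw [← hsdef]
    field_simp
  have harcsin : HasDerivAt Real.arcsin (1 / s) x :=
    Real.hasDerivAt_arcsin (by linarith) (by linarith)
  have hmul : HasDerivAt (fun ρ : ℝ => ρ * Real.sqrt (1 - ρ ^ 2))
      (1 * s + x * (-x / s)) x := (hasDerivAt_id x).mul hsqrt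
  have hN : HasDerivAt (fun ρ : ℝ => Real.arcsin ρ - ρ * Real.sqrt (1 - ρ ^ 2))
      (1 / s - (1 * s + x * (-x / s))) x := harcsin.sub hmul
  have hpow : HasDerivAt (fun ρ : ℝ => ρ ^ 2) (2 * x) x := by
    simpa using hasDerivAt_pow 2 x
  have hx2ne : x ^ 2 ≠ 0 := pow_ne_zero _ h0.ne'
  have hdiv : HasDerivAt (fun ρ : ℝ => (Real.arcsin ρ - ρ * Real.sqrt (1 - ρ ^ 2)) / ρ ^ 2)
      (((1 / s - (1 * s + x * (-x / s))) * x ^ 2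
          - (Real.arcsin x - x * s) * (2 * x)) / (x ^ 2) ^ 2) x := hN.div hpow hx2ne
  have heq : combC =ᶠ[nhds x]
      fun ρ : ℝ => (Real.arcsin ρ - ρ * Real.sqrt (1 - ρ ^ 2)) / ρ ^ 2 := by
    filter_upwards [eventually_ne_nhds h0.ne'] with ρ hρ
    simp [combC, hρ]
  refine ⟨_, hdiv.congr_of_eventuallyEq heq, ?_⟩
  apply div_pos _ (by positivity)
  have hkey : Real.arcsin x < x / s := combC_key h0 h1
  have hM : (1 / s - (1 * s + x * (-x / s))) * x ^ 2 - (Real.arcsin x - x * s) * (2 * x)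
      = 2 * x * (x / s - Real.arcsin x) := by
    field_simp
    nlinarith [hs2]
  rw [hM]
  have : 0 < x / s - Real.arcsin x := by linarith
  positivity

lemma combC_lt {a b : ℝ} (ha : 0 < a) (hb : b ≤ 1) (hab : a < b) : combC a < combC b := by
  have hcontF : ContinuousOn
      (fun ρ : ℝ => (Real.arcsin ρ - ρ * Real.sqrt (1 - ρ ^ 2)) / ρ ^ 2) (Icc a b) := by
    apply ContinuousOn.div
    · exact (Real.continuous_arcsin.sub
        (continuous_id.mul (Real.continuous_sqrt.comp (by continuity)))).continuousOn
    · exact (continuous_pow 2).continuousOn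
    · intro ρ hρ
      exact pow_ne_zero _ (lt_of_lt_of_le ha hρ.1).ne'
  have heqon : EqOn combC
      (fun ρ : ℝ => (Real.arcsin ρ - ρ * Real.sqrt (1 - ρ ^ 2)) / ρ ^ 2) (Icc a b) := by
    intro ρ hρ
    simp [combC, (lt_of_lt_of_le ha hρ.1).ne']
  have hmono : StrictMonoOn combC (Icc a b) := by
    apply strictMonoOn_of_deriv_pos (convex_Icc a b) (hcontF.congr heqon)
    intro x hx
    rw [interior_Icc] at hx
    obtain ⟨d, hd, hdpos⟩ := combC_hasDerivAt (ha.trans hx.1) (hx.2.trans_le hb)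
    rwa [hd.deriv]
  exact hmono (left_mem_Icc.mpr hab.le) (right_mem_Icc.mpr hab.le) hab

lemma combC_pos {ρ : ℝ} (h0 : 0 < ρ) (h1 : ρ ≤ 1) : 0 < combC ρ := by
  rw [combC, if_neg h0.ne']
  apply div_pos _ (by positivity)
  have hlt : ρ < Real.arcsin ρ := by
    have h := Real.sin_lt (Real.arcsin_pos.mpr h0)
    rwa [Real.sin_arcsin (by linarith) h1] at h
  have hsle : Real.sqrt (1 - ρ ^ 2) ≤ 1 := by
    have h2 : Real.sqrt (1 - ρ ^ 2) ≤ Real.sqrt 1 := Real.sqrt_le_sqrt (by nlinarith)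
    simpa using h2
  nlinarith

lemma combC_neg_eq (ρ : ℝ) : combC (-ρ) = -combC ρ := by
  unfold combC
  rcases eq_or_ne ρ 0 with h | h
  · simp [h]
  · rw [if_neg (neg_ne_zero.mpr h), if_neg h, Real.arcsin_neg, neg_sq]
    ring

/-- The scaled comb-area function is strictly monotonically increasing on `[−1, 1]`. -/
theorem combC_strictMonoOn : StrictMonoOn combC (Set.Icc (-1 : ℝ) 1) := by
  intro x hx y hy hxy
  have h0 : combC 0 = 0 := by simp [combC]
  rcases lt_trichotomy x 0 with hxneg | hx0 | hxpos
  · have hxval : combC x = -combC (-x) := by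
      rw [show x = -(-x) by ring, combC_neg_eq]; ring_nf
    have hxpos' : 0 < combC (-x) := combC_pos (by linarith) (by linarith [hx.1])
    rcases lt_trichotomy y 0 with hyneg | hy0 | hypos
    · have hyval : combC y = -combC (-y) := by
        rw [show y = -(-y) by ring, combC_neg_eq]; ring_nf
      have := combC_lt (a := -y) (b := -x) (by linarith) (by linarith [hx.1]) (by linarith)
      rw [hxval, hyval]; linarith
    · rw [hy0, h0, hxval]; linarith
    · have := combC_pos hypos hy.2
      rw [hxval]; linarith
  · rw [hx0, h0]
    exact combC_pos (by linarith) hy.2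
  · exact combC_lt hxpos hy.2 hxy
end
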